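/- Let a ∈ ℝ with a ≠ 0 and let x ∈ ℝ^p. Then the matrix f := a·I + Σ_{j=1}^p x_j E_j is invertible, and Σ_{σ ∈ S_p} sgn(σ) · tr( f^{−1} E_{σ(1)} f^{−1} E_{σ(2)} ⋯ f^{−1} E_{σ(p)} ) = p! · a · (a² + |x|²)^{−(p+1)/2} · tr(E_1 E_2 ⋯ E_p). -/

import Mathlib

namespace Stmt12Aux

variable {R : Type*} [Ring R]

lemma front_swap : ∀ {n : ℕ} (h : Fin n → R) (t : Fin n) (A B : R),
    A * B = -(B * A) →
    (∀ c, c ≠ t → A * h c = -(h c * A)) →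
    (∀ c, c ≠ t → B * h c = -(h c * B)) →
    A * (List.ofFn (Function.update h t B)).prod
      = -(B * (List.ofFn (Function.update h t A)).prod) := by
  intro n
  induction n with
  | zero => intro h t; exact t.elim0
  | succ n ih =>
    intro h t A B hAB hA hB
    induction t using Fin.cases with
    | zero =>
      simp only [List.ofFn_succ, List.prod_cons, Function.update_self]
      have htail : ∀ i : Fin n, Function.update h 0 B i.succ = h i.succ := fun i =>
        Function.update_of_ne (Fin.succ_ne_zero i) _ _
      have htail' : ∀ i : Fin n, Function.update h 0 A i.succ = h i.succ := fun i =>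
        Function.update_of_ne (Fin.succ_ne_zero i) _ _
      simp only [htail, htail']
      rw [← mul_assoc, ← mul_assoc, hAB, neg_mul]
    | succ t =>
      have h0B : Function.update h t.succ B 0 = h 0 :=
        Function.update_of_ne (Fin.succ_ne_zero t).symm _ _
      have h0A : Function.update h t.succ A 0 = h 0 :=
        Function.update_of_ne (Fin.succ_ne_zero t).symm _ _
      have htailB : (fun i : Fin n => Function.update h t.succ B i.succ)
          = Function.update (fun i : Fin n => h i.succ) t B := by
        funext i
        by_cases hi : i = t
        · subst hi; simp
        · rw [Function.update_of_ne (fun hc => hi (Fin.succ_injective _ hc)),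
            Function.update_of_ne hi]
      have htailA : (fun i : Fin n => Function.update h t.succ A i.succ)
          = Function.update (fun i : Fin n => h i.succ) t A := by
        funext i
        by_cases hi : i = t
        · subst hi; simp
        · rw [Function.update_of_ne (fun hc => hi (Fin.succ_injective _ hc)),
            Function.update_of_ne hi]
      simp only [List.ofFn_succ, List.prod_cons, h0B, h0A, htailB, htailA]
      have hA0 : A * h 0 = -(h 0 * A) := hA 0 (Fin.succ_ne_zero t).symm
      have hB0 : B * h 0 = -(h 0 * B) := hB 0 (Fin.succ_ne_zero t).symm
      have ihres := ih (fun i : Fin n => h i.succ) t A B hAB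
        (fun c hc => hA c.succ (fun hcc => hc (Fin.succ_injective _ hcc)))
        (fun c hc => hB c.succ (fun hcc => hc (Fin.succ_injective _ hcc)))
      calc A * (h 0 * (List.ofFn (Function.update (fun i : Fin n => h i.succ) t B)).prod)
          = (A * h 0) * (List.ofFn (Function.update (fun i : Fin n => h i.succ) t B)).prod := by
            rw [mul_assoc]
        _ = -(h 0 * (A * (List.ofFn (Function.update (fun i : Fin n => h i.succ) t B)).prod)) := by
            rw [hA0, neg_mul, mul_assoc]
        _ = -(h 0 * (-(B * (List.ofFn (Function.update (fun i : Fin n => h i.succ) t A)).prod))) := by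
            rw [ihres]
        _ = -(B * (h 0 * (List.ofFn (Function.update (fun i : Fin n => h i.succ) t A)).prod)) := by
            have hB0' : h 0 * B = -(B * h 0) := by rw [hB0, neg_neg]
            rw [mul_neg, neg_neg, ← mul_assoc, hB0', neg_mul, mul_assoc]


lemma swap_ofFn : ∀ {n : ℕ} (h : Fin n → R),
    (∀ b c, b ≠ c → h b * h c = -(h c * h b)) →
    ∀ (x y : Fin n), x ≠ y →
    (List.ofFn (h ∘ Equiv.swap x y)).prod = -((List.ofFn h).prod) := by
  intro n
  induction n with
  | zero => intro h _ x; exact x.elim0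
  | succ n ih =>
    intro h hh x y hxy
    -- helper for the case x = 0
    have key : ∀ y : Fin (n+1), y ≠ 0 →
        (List.ofFn (h ∘ Equiv.swap 0 y)).prod = -((List.ofFn h).prod) := by
      intro y hy0
      set y' := y.pred hy0 with hy'
      have hys : y'.succ = y := Fin.succ_pred y hy0
      have htail : (fun i : Fin n => (h ∘ Equiv.swap 0 y) i.succ)
          = Function.update (fun i : Fin n => h i.succ) y' (h 0) := by
        funext i
        by_cases hi : i = y'
        · subst hi
          simp only [Function.comp_apply, hys, Equiv.swap_apply_right, Function.update_self]
        · have h1 : i.succ ≠ 0 := Fin.succ_ne_zero i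
          have h2 : i.succ ≠ y := fun hc => hi (Fin.succ_injective _ (by rw [hys]; exact hc))
          simp only [Function.comp_apply, Equiv.swap_apply_of_ne_of_ne h1 h2,
            Function.update_of_ne hi]
      have hhead : (h ∘ Equiv.swap 0 y) 0 = h y := by
        simp [Equiv.swap_apply_left]
      rw [List.ofFn_succ, List.prod_cons, hhead, htail]
      have hfs := front_swap (fun i : Fin n => h i.succ) y' (h y) (h 0)
        (hh y 0 hy0)
        (fun c hc => hh y c.succ (fun hcc => hc (Fin.succ_injective _ (by rw [hys, ← hcc]))))
        (fun c _ => hh 0 c.succ (Fin.succ_ne_zero c).symm)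
      have hupd : Function.update (fun i : Fin n => h i.succ) y' (h y)
          = fun i : Fin n => h i.succ := by
        have : (fun i : Fin n => h i.succ) y' = h y := show h y'.succ = h y from by rw [hys]
        rw [← this, Function.update_eq_self]
      rw [hfs, hupd, List.ofFn_succ, List.prod_cons]
    rcases eq_or_ne x 0 with hx0 | hx0
    · subst hx0; exact key y hxy.symm
    rcases eq_or_ne y 0 with hy0 | hy0
    · subst hy0; rw [Equiv.swap_comm]; exact key x hxy
    -- both nonzero
    set x' := x.pred hx0
    set y' := y.pred hy0
    have hxs : x'.succ = x := Fin.succ_pred x hx0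
    have hys : y'.succ = y := Fin.succ_pred y hy0
    have hx'y' : x' ≠ y' := by
      intro hc; apply hxy; rw [← hxs, ← hys, hc]
    have hhead : (h ∘ Equiv.swap x y) 0 = h 0 := by
      simp only [Function.comp_apply, Equiv.swap_apply_of_ne_of_ne (Ne.symm hx0) (Ne.symm hy0)]
    have htail : (fun i : Fin n => (h ∘ Equiv.swap x y) i.succ)
        = (fun i : Fin n => h i.succ) ∘ Equiv.swap x' y' := by
      funext i
      have : Equiv.swap x y i.succ = (Equiv.swap x' y' i).succ := by
        rw [← hxs, ← hys, Fin.succ_injective n |>.swap_apply]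
      simp only [Function.comp_apply, this]
    rw [List.ofFn_succ, List.prod_cons, hhead, htail,
      ih (fun i : Fin n => h i.succ)
        (fun b c hbc => hh b.succ c.succ (fun hcc => hbc (Fin.succ_injective n hcc)))
        x' y' hx'y',
      List.ofFn_succ, List.prod_cons, mul_neg]

lemma perm_ofFn {n : ℕ} (σ : Equiv.Perm (Fin n)) :
    ∀ (h : Fin n → R), (∀ b c, b ≠ c → h b * h c = -(h c * h b)) →
    (List.ofFn (h ∘ σ)).prod = (Equiv.Perm.sign σ : ℤ) • (List.ofFn h).prod := by
  refine Equiv.Perm.swap_induction_on σ ?_ ?_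
  · intro h _
    simp
  · intro f x y hxy ih h hh
    have hcomp : h ∘ (Equiv.swap x y * f) = (h ∘ Equiv.swap x y) ∘ f := by
      funext b; simp [Equiv.Perm.mul_apply]
    have hh' : ∀ b c, b ≠ c → (h ∘ Equiv.swap x y) b * (h ∘ Equiv.swap x y) c
        = -((h ∘ Equiv.swap x y) c * (h ∘ Equiv.swap x y) b) := by
      intro b c hbc
      exact hh _ _ (fun hc => hbc ((Equiv.swap x y).injective hc))
    rw [hcomp, ih (h ∘ Equiv.swap x y) hh', swap_ofFn h hh x y hxy,
      Equiv.Perm.sign_mul, Equiv.Perm.sign_swap hxy]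
    push_cast
    rw [neg_one_mul, neg_smul, smul_neg]


lemma countP_ne {α : Type*} [DecidableEq α] (l : List α) (hl : l.Nodup) (j : α) (hj : j ∈ l) :
    l.countP (fun i => decide (i ≠ j)) = l.length - 1 := by
  induction l with
  | nil => simp at hj
  | cons a l ih =>
    by_cases hja : j = a
    · subst hja
      rw [List.countP_cons]
      have hnotin : j ∉ l := (List.nodup_cons.mp hl).1
      have hall : l.countP (fun i => decide (i ≠ j)) = l.length :=
        List.countP_eq_length.mpr (fun b hb => by
          simp only [decide_eq_true_eq]
          exact fun hc => hnotin (hc ▸ hb))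
      rw [hall]
      simp
    · have h : j ∈ l := by
        rcases List.mem_cons.mp hj with h | h
        · exact absurd h hja
        · exact h
      have hlen : 1 ≤ l.length := List.length_pos_iff.mpr (List.ne_nil_of_mem h)
      rw [List.countP_cons, ih (List.nodup_cons.mp hl).2 h]
      have hne : a ≠ j := fun hc => hja hc.symm
      have hone : (if decide (a ≠ j) = true then 1 else 0) = 1 := by simp [hne]
      rw [hone, List.length_cons]
      omega

section Cliff
variable {p N : ℕ}

lemma comm_list (E : Fin p → Matrix (Fin N) (Fin N) ℂ)
    (hac : ∀ i j, i ≠ j → E i * E j = -(E j * E i)) (j : Fin p) :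
    ∀ (L : List (Fin p)), E j * (L.map E).prod
      = ((-1:ℂ) ^ (L.countP (fun i => decide (i ≠ j)))) • ((L.map E).prod * E j) := by
  intro L
  induction L with
  | nil => simp
  | cons i L ih =>
    simp only [List.map_cons, List.prod_cons, List.countP_cons]
    by_cases hij : i = j
    · subst hij
      have step : E i * (E i * (List.map E L).prod)
          = E i * ((-1:ℂ) ^ (L.countP (fun b => decide (b ≠ i))) • ((List.map E L).prod * E i)) := by
        rw [ih]
      rw [step]
      simp [mul_smul_comm, smul_mul_assoc, mul_assoc]
    · have hcomm : E j * E i = -(E i * E j) := hac j i (Ne.symm hij)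
      have hd : (decide (i ≠ j)) = true := by simp [hij]
      calc E j * (E i * (List.map E L).prod) = (E j * E i) * (List.map E L).prod := by
            rw [mul_assoc]
        _ = -(E i * (E j * (List.map E L).prod)) := by rw [hcomm]; simp [mul_assoc]
        _ = -(E i * ((-1:ℂ) ^ (L.countP (fun b => decide (b ≠ j))) • ((List.map E L).prod * E j))) := by
            rw [ih]
        _ = ((-1:ℂ) ^ (L.countP (fun b => decide (b ≠ j)) + if decide (i ≠ j) = true then 1 else 0))
              • (E i * (List.map E L).prod * E j) := by
            rw [hd]
            simp [mul_smul_comm, pow_succ, mul_assoc, mul_comm]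

lemma trace_zero (E : Fin p → Matrix (Fin N) (Fin N) ℂ)
    (hsq : ∀ i, E i * E i = -1)
    (hac : ∀ i j, i ≠ j → E i * E j = -(E j * E i))
    (L : List (Fin p)) (j : Fin p)
    (hodd : Odd (L.countP (fun i => decide (i ≠ j)))) :
    ((L.map E).prod).trace = 0 := by
  set P := (L.map E).prod with hP
  have hcomm : E j * P = -(P * E j) := by
    rw [hP, comm_list E hac j L, hodd.neg_one_pow, neg_one_smul]
  have h1 : E j * (P * E j) = P := by
    rw [← mul_assoc, hcomm, neg_mul, mul_assoc, hsq j]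
    simp
  have h2 : (E j * (P * E j)).trace = -P.trace := by
    rw [Matrix.trace_mul_comm, mul_assoc, hsq j]
    simp
  rw [h1] at h2
  linear_combination h2 / 2

end Cliff

lemma sum_cancel {n : ℕ} (F : Equiv.Perm (Fin n) → ℂ) (s t : Fin n) (hst : s ≠ t)
    (hF : ∀ σ, F (σ * Equiv.swap s t) = F σ) :
    ∑ σ : Equiv.Perm (Fin n), ((Equiv.Perm.sign σ : ℤ) : ℂ) * F σ = 0 := by
  have h := Equiv.sum_comp (Equiv.mulRight (Equiv.swap s t))
    (fun σ => ((Equiv.Perm.sign σ : ℤ) : ℂ) * F σ)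
  have h2 : ∀ σ : Equiv.Perm (Fin n),
      ((Equiv.Perm.sign (σ * Equiv.swap s t) : ℤ) : ℂ) * F (σ * Equiv.swap s t)
      = -(((Equiv.Perm.sign σ : ℤ) : ℂ) * F σ) := by
    intro σ
    rw [hF, Equiv.Perm.sign_mul, Equiv.Perm.sign_swap hst]
    push_cast
    ring
  simp only [Equiv.coe_mulRight] at h
  rw [Finset.sum_congr rfl (fun σ _ => h2 σ)] at h
  rw [Finset.sum_neg_distrib] at h
  linear_combination -h / 2


section Main
variable {p N : ℕ}

/-- product of plain `E (σ b)` over a list of positions -/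
noncomputable def WE (E : Fin p → Matrix (Fin N) (Fin N) ℂ) (σ : Equiv.Perm (Fin p)) (L : List (Fin p)) :
    Matrix (Fin N) (Fin N) ℂ := (L.map (fun b => E (σ b))).prod

/-- product of `g * E (σ b)` over a list of positions -/
noncomputable def WF (g : Matrix (Fin N) (Fin N) ℂ) (E : Fin p → Matrix (Fin N) (Fin N) ℂ)
    (σ : Equiv.Perm (Fin p)) (L : List (Fin p)) :
    Matrix (Fin N) (Fin N) ℂ := (L.map (fun b => g * E (σ b))).prod

@[simp] lemma WE_nil (E : Fin p → Matrix (Fin N) (Fin N) ℂ) (σ) : WE E σ [] = 1 := rfl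
@[simp] lemma WF_nil (g) (E : Fin p → Matrix (Fin N) (Fin N) ℂ) (σ) : WF g E σ [] = 1 := rfl

lemma WE_cons (E : Fin p → Matrix (Fin N) (Fin N) ℂ) (σ) (b) (L) :
    WE E σ (b :: L) = E (σ b) * WE E σ L := by simp [WE]

lemma WF_cons (g) (E : Fin p → Matrix (Fin N) (Fin N) ℂ) (σ) (b) (L) :
    WF g E σ (b :: L) = (g * E (σ b)) * WF g E σ L := by simp [WF]

lemma WE_append (E : Fin p → Matrix (Fin N) (Fin N) ℂ) (σ) (L1 L2) :
    WE E σ (L1 ++ L2) = WE E σ L1 * WE E σ L2 := by simp [WE]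

lemma WE_comp_swap (E : Fin p → Matrix (Fin N) (Fin N) ℂ) (σ) (s t : Fin p) (L)
    (hs : s ∉ L) (ht : t ∉ L) :
    WE E (σ * Equiv.swap s t) L = WE E σ L := by
  unfold WE
  congr 1
  refine List.map_congr_left (fun b hb => ?_)
  rw [Equiv.Perm.mul_apply, Equiv.swap_apply_of_ne_of_ne
    (fun hc => hs (by rw [← hc]; exact hb)) (fun hc => ht (by rw [← hc]; exact hb))]

lemma WF_comp_swap (g) (E : Fin p → Matrix (Fin N) (Fin N) ℂ) (σ) (s t : Fin p) (L)
    (hs : s ∉ L) (ht : t ∉ L) :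
    WF g E (σ * Equiv.swap s t) L = WF g E σ L := by
  unfold WF
  congr 1
  refine List.map_congr_left (fun b hb => ?_)
  rw [Equiv.Perm.mul_apply, Equiv.swap_apply_of_ne_of_ne
    (fun hc => hs (by rw [← hc]; exact hb)) (fun hc => ht (by rw [← hc]; exact hb))]

lemma drop_finRange_cons (q : ℕ) (h : q < p) :
    (List.finRange p).drop q = (⟨q, h⟩ : Fin p) :: (List.finRange p).drop (q+1) := by
  have hlen : q < (List.finRange p).length := by simpa using h
  rw [List.drop_eq_getElem_cons hlen]
  congr 1
  simp [List.getElem_finRange, Fin.cast]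

lemma mem_take_finRange {b : Fin p} {t : ℕ} (h : b ∈ (List.finRange p).take t) : (b : ℕ) < t := by
  obtain ⟨i, hi, heq⟩ := List.getElem_of_mem h
  have hi' : i < t := lt_of_lt_of_le hi (by simp [List.length_take])
  have : ((List.finRange p).take t)[i] = (List.finRange p)[i]'(by
      simp only [List.length_finRange]
      exact lt_of_lt_of_le hi (by simp [List.length_take])) := List.getElem_take
  rw [this] at heq
  rw [List.getElem_finRange] at heq
  have : (b : ℕ) = i := by rw [← heq]; rfl
  omega

lemma mem_drop_finRange {b : Fin p} {t : ℕ} (h : b ∈ (List.finRange p).drop t) : t ≤ (b : ℕ) := by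
  obtain ⟨i, hi, heq⟩ := List.getElem_of_mem h
  rw [List.getElem_drop] at heq
  rw [List.getElem_finRange] at heq
  have : (b : ℕ) = t + i := by rw [← heq]; rfl
  omega

lemma mem_mid_finRange {b : Fin p} {t r : ℕ}
    (h : b ∈ ((List.finRange p).drop t).take r) : t ≤ (b : ℕ) ∧ (b : ℕ) < t + r := by
  obtain ⟨i, hi, heq⟩ := List.getElem_of_mem h
  have hilen : i < r := lt_of_lt_of_le hi (by simp [List.length_take])
  have h2 : (((List.finRange p).drop t).take r)[i]
      = ((List.finRange p).drop t)[i]'(lt_of_lt_of_le hi (by simp [List.length_take])) :=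
    List.getElem_take
  rw [h2, List.getElem_drop, List.getElem_finRange] at heq
  have : (b : ℕ) = t + i := by rw [← heq]; rfl
  omega

lemma TM_sublist {α : Type*} (l : List α) (t m : ℕ) :
    (l.take t ++ (l.drop (t+1)).take m).Sublist l := by
  conv_rhs => rw [← List.take_append_drop t l]
  refine List.Sublist.append_left ?_ _
  have h1 : ((l.drop (t+1)).take m).Sublist (l.drop (t+1)) := List.take_sublist _ _
  have h2 : (l.drop (t+1)).Sublist (l.drop t) := by
    have := List.drop_sublist 1 (List.drop t l)
    rwa [List.drop_drop] at this
  exact h1.trans h2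

noncomputable def SS (g : Matrix (Fin N) (Fin N) ℂ) (E : Fin p → Matrix (Fin N) (Fin N) ℂ)
    (t : ℕ) : ℂ :=
  ∑ σ : Equiv.Perm (Fin p), ((Equiv.Perm.sign σ : ℤ) : ℂ) *
    (WE E σ ((List.finRange p).take t) * WF g E σ ((List.finRange p).drop t)).trace

noncomputable def GG (g : Matrix (Fin N) (Fin N) ℂ) (E : Fin p → Matrix (Fin N) (Fin N) ℂ)
    (y : Fin p → ℂ) (b : Fin p) (t r : ℕ) : ℂ :=
  ∑ σ : Equiv.Perm (Fin p), ((Equiv.Perm.sign σ : ℤ) : ℂ) *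
    (y (σ b) *
      (WE E σ ((List.finRange p).take t ++ ((List.finRange p).drop (t+1)).take (2*r)) *
        WF g E σ ((List.finRange p).drop (t+1+2*r))).trace)

lemma pair_trace (E : Fin p → Matrix (Fin N) (Fin N) ℂ) (g : Matrix (Fin N) (Fin N) ℂ)
    (c : ℂ) (y : Fin p → ℂ)
    (hstep : ∀ (j j' : Fin p) (Z : Matrix (Fin N) (Fin N) ℂ),
      (g * E j) * ((g * E j') * Z)
        = c⁻¹ • (E j * (E j' * Z)) + (y j * c⁻¹) • ((g * E j') * Z))
    (σ : Equiv.Perm (Fin p)) (L : List (Fin p)) (q : ℕ) (hq2 : q + 2 ≤ p)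
    (bq bq1 : Fin p) (hbq : (bq : ℕ) = q) (hbq1 : (bq1 : ℕ) = q + 1) :
    (WE E σ L * WF g E σ ((List.finRange p).drop q)).trace
      = c⁻¹ * (WE E σ (L ++ [bq, bq1]) * WF g E σ ((List.finRange p).drop (q+2))).trace
        + (y (σ bq) * c⁻¹) * (WE E σ L * WF g E σ ((List.finRange p).drop (q+1))).trace := by
  have e1 : (List.finRange p).drop q = bq :: (List.finRange p).drop (q+1) := by
    rw [drop_finRange_cons q (by omega)]
    congr 1
    exact Fin.ext hbq.symm
  have e2 : (List.finRange p).drop (q+1) = bq1 :: (List.finRange p).drop (q+2) := by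
    rw [drop_finRange_cons (q+1) (by omega)]
    congr 1
    exact Fin.ext hbq1.symm
  have e3 : WE E σ (L ++ [bq, bq1]) * WF g E σ ((List.finRange p).drop (q+2))
      = WE E σ L * (E (σ bq) * (E (σ bq1) * WF g E σ ((List.finRange p).drop (q+2)))) := by
    rw [WE_append]
    simp only [WE, List.map_cons, List.map_nil, List.prod_cons, List.prod_nil, mul_one]
    rw [mul_assoc, mul_assoc]
  have e4 : (g * E (σ bq1)) * WF g E σ ((List.finRange p).drop (q+2))
      = WF g E σ ((List.finRange p).drop (q+1)) := by
    rw [e2, WF_cons]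
  rw [e3]
  conv_lhs => rw [e1, WF_cons, e2, WF_cons]
  rw [hstep (σ bq) (σ bq1) (WF g E σ ((List.finRange p).drop (q+2))), e4]
  rw [mul_add, Matrix.trace_add, mul_smul_comm, mul_smul_comm, Matrix.trace_smul,
    Matrix.trace_smul, smul_eq_mul, smul_eq_mul]

lemma lemB (E : Fin p → Matrix (Fin N) (Fin N) ℂ)
    (hsq : ∀ i, E i * E i = -1)
    (hac : ∀ i j, i ≠ j → E i * E j = -(E j * E i))
    (g : Matrix (Fin N) (Fin N) ℂ) (c : ℂ) (y : Fin p → ℂ)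
    (hstep : ∀ (j j' : Fin p) (Z : Matrix (Fin N) (Fin N) ℂ),
      (g * E j) * ((g * E j') * Z)
        = c⁻¹ • (E j * (E j' * Z)) + (y j * c⁻¹) • ((g * E j') * Z))
    (hpodd : Odd p) (hp3 : 3 ≤ p) :
    ∀ (m t r : ℕ) (b : Fin p), (b : ℕ) = t → t + 1 + (2*r + 2*m) = p →
      GG g E y b t r = 0 := by
  intro m
  induction m with
  | zero =>
    intro t r b hb hsum
    unfold GG
    apply Finset.sum_eq_zero
    intro σ _
    have hnil : (List.finRange p).drop (t+1+2*r) = [] := by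
      apply List.drop_eq_nil_of_le
      simp only [List.length_finRange]
      omega
    rw [hnil, WF_nil, mul_one]
    set L := (List.finRange p).take t ++ ((List.finRange p).drop (t+1)).take (2*r) with hL
    have hlenL : L.length = p - 1 := by
      rw [hL, List.length_append, List.length_take, List.length_take, List.length_finRange,
        List.length_drop, List.length_finRange]
      omega
    have hWE : WE E σ L = ((L.map σ).map E).prod := by
      unfold WE
      rw [List.map_map]
      rfl
    have hnodup : (L.map σ).Nodup := by
      refine List.Nodup.map (Equiv.injective σ) ?_
      exact ((TM_sublist (List.finRange p) t (2*r)).nodup (List.nodup_finRange p))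
    have hlen' : (L.map σ).length = p - 1 := by rw [List.length_map, hlenL]
    have hne : L.map σ ≠ [] := by
      apply List.ne_nil_of_length_pos
      omega
    set j := (L.map σ).head hne with hj
    have hjm : j ∈ L.map σ := List.head_mem hne
    have hcount : (L.map σ).countP (fun i => decide (i ≠ j)) = p - 2 := by
      rw [countP_ne _ hnodup j hjm, hlen']
      omega
    have hodd : Odd ((L.map σ).countP (fun i => decide (i ≠ j))) := by
      rw [hcount]
      obtain ⟨w, hw⟩ := hpodd
      exact ⟨w - 1, by omega⟩
    rw [hWE, trace_zero E hsq hac (L.map σ) j hodd]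
    ring
  | succ m ih =>
    intro t r b hb hsum
    have hq2 : (t+1+2*r) + 2 ≤ p := by omega
    set q := t+1+2*r with hq
    have hbqv : q < p := by omega
    have hbq1v : q + 1 < p := by omega
    set bq : Fin p := ⟨q, hbqv⟩ with hbq
    set bq1 : Fin p := ⟨q+1, hbq1v⟩ with hbq1
    set L := (List.finRange p).take t ++ ((List.finRange p).drop (t+1)).take (2*r) with hL
    -- list bookkeeping
    have hmid : ((List.finRange p).drop (t+1)).take (2*(r+1))
        = ((List.finRange p).drop (t+1)).take (2*r) ++ [bq, bq1] := by
      have h1 : 2*(r+1) = 2*r + 2 := by ring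
      rw [h1, List.take_add]
      congr 1
      have hdd : List.drop (2*r) ((List.finRange p).drop (t+1)) = (List.finRange p).drop q := by
        rw [List.drop_drop]
      rw [hdd, drop_finRange_cons q hbqv, drop_finRange_cons (q+1) hbq1v]
      simp [hbq, hbq1]
    have hLL : (List.finRange p).take t ++ ((List.finRange p).drop (t+1)).take (2*(r+1))
        = L ++ [bq, bq1] := by
      rw [hmid, hL, List.append_assoc]
    -- memberships
    have hbL : b ∉ L := by
      rw [hL]
      intro hmem
      rcases List.mem_append.mp hmem with h | h
      · have := mem_take_finRange h; omega
      · have := mem_mid_finRange h; omega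
    have hbqL : bq ∉ L := by
      rw [hL]
      intro hmem
      rcases List.mem_append.mp hmem with h | h
      · have := mem_take_finRange h
        simp only [hbq] at this
        omega
      · have := mem_mid_finRange h
        simp only [hbq] at this
        omega
    have hbD : b ∉ (List.finRange p).drop (q+1) := by
      intro hmem
      have := mem_drop_finRange hmem
      omega
    have hbqD : bq ∉ (List.finRange p).drop (q+1) := by
      intro hmem
      have := mem_drop_finRange hmem
      simp only [hbq] at this
      omega
    have hbbq : b ≠ bq := by
      intro hc
      have : (b : ℕ) = q := by rw [hc]
      omega
    -- expand
    unfold GG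
    have hsplit : ∀ σ : Equiv.Perm (Fin p),
        ((Equiv.Perm.sign σ : ℤ) : ℂ) * (y (σ b) *
          (WE E σ L * WF g E σ ((List.finRange p).drop (t+1+2*r))).trace)
        = c⁻¹ * (((Equiv.Perm.sign σ : ℤ) : ℂ) * (y (σ b) *
            (WE E σ (L ++ [bq, bq1]) * WF g E σ ((List.finRange p).drop (t+1+2*(r+1)))).trace))
          + c⁻¹ * (((Equiv.Perm.sign σ : ℤ) : ℂ) * (y (σ b) * (y (σ bq) *
            (WE E σ L * WF g E σ ((List.finRange p).drop (q+1))).trace))) := by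
      intro σ
      have hdeq : t+1+2*(r+1) = q + 2 := by omega
      rw [hdeq]
      rw [pair_trace E g c y hstep σ L q hq2 bq bq1 rfl rfl]
      ring
    rw [Finset.sum_congr rfl (fun σ _ => hsplit σ), Finset.sum_add_distrib,
      ← Finset.mul_sum, ← Finset.mul_sum]
    have hIH : (∑ σ : Equiv.Perm (Fin p), ((Equiv.Perm.sign σ : ℤ) : ℂ) * (y (σ b) *
        (WE E σ (L ++ [bq, bq1]) * WF g E σ ((List.finRange p).drop (t+1+2*(r+1)))).trace)) = 0 := by
      have := ih t (r+1) b hb (by omega)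
      unfold GG at this
      rw [hLL] at this
      exact this
    have hcancel : (∑ σ : Equiv.Perm (Fin p), ((Equiv.Perm.sign σ : ℤ) : ℂ) * (y (σ b) * (y (σ bq) *
        (WE E σ L * WF g E σ ((List.finRange p).drop (q+1))).trace))) = 0 := by
      apply sum_cancel _ b bq hbbq
      intro σ
      rw [WE_comp_swap E σ b bq L hbL hbqL, WF_comp_swap g E σ b bq _ hbD hbqD]
      have h1 : (σ * Equiv.swap b bq) b = σ bq := by
        rw [Equiv.Perm.mul_apply, Equiv.swap_apply_left]
      have h2 : (σ * Equiv.swap b bq) bq = σ b := by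
        rw [Equiv.Perm.mul_apply, Equiv.swap_apply_right]
      rw [h1, h2]
      ring
    rw [hIH, hcancel]
    ring

lemma lemA (E : Fin p → Matrix (Fin N) (Fin N) ℂ) (g : Matrix (Fin N) (Fin N) ℂ)
    (c : ℂ) (y : Fin p → ℂ)
    (hstep : ∀ (j j' : Fin p) (Z : Matrix (Fin N) (Fin N) ℂ),
      (g * E j) * ((g * E j') * Z)
        = c⁻¹ • (E j * (E j' * Z)) + (y j * c⁻¹) • ((g * E j') * Z))
    (t : ℕ) (ht2 : t + 2 ≤ p) (b : Fin p) (hb : (b : ℕ) = t) :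
    SS g E t = c⁻¹ * SS g E (t+2) + c⁻¹ * GG g E y b t 0 := by
  have hbv : t < p := by omega
  have hb1v : t + 1 < p := by omega
  set bt1 : Fin p := ⟨t+1, hb1v⟩ with hbt1
  have hbeq : b = (⟨t, hbv⟩ : Fin p) := Fin.ext hb
  have htake : (List.finRange p).take (t+2) = (List.finRange p).take t ++ [b, bt1] := by
    rw [List.take_add]
    congr 1
    rw [drop_finRange_cons t hbv, drop_finRange_cons (t+1) hb1v]
    simp [hbeq, hbt1]
  unfold SS GG
  have hsplit : ∀ σ : Equiv.Perm (Fin p),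
      ((Equiv.Perm.sign σ : ℤ) : ℂ) *
        (WE E σ ((List.finRange p).take t) * WF g E σ ((List.finRange p).drop t)).trace
      = c⁻¹ * (((Equiv.Perm.sign σ : ℤ) : ℂ) *
          (WE E σ ((List.finRange p).take (t+2)) * WF g E σ ((List.finRange p).drop (t+2))).trace)
        + c⁻¹ * (((Equiv.Perm.sign σ : ℤ) : ℂ) * (y (σ b) *
          (WE E σ ((List.finRange p).take t ++ ((List.finRange p).drop (t+1)).take (2*0)) *
            WF g E σ ((List.finRange p).drop (t+1+2*0))).trace)) := by
    intro σ
    have hz : (2:ℕ)*0 = 0 := by norm_num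
    rw [hz]
    simp only [List.take_zero, List.append_nil, Nat.add_zero]
    rw [pair_trace E g c y hstep σ ((List.finRange p).take t) t ht2 b bt1 hb rfl, htake]
    try ring
  rw [Finset.sum_congr rfl (fun σ _ => hsplit σ), Finset.sum_add_distrib,
    ← Finset.mul_sum, ← Finset.mul_sum]

lemma lemC (E : Fin p → Matrix (Fin N) (Fin N) ℂ) (g f : Matrix (Fin N) (Fin N) ℂ)
    (c : ℂ) (y : Fin p → ℂ)
    (hrel : ∀ j, g * E j = c⁻¹ • (E j * f) + (y j * c⁻¹) • 1)
    (hp1 : 1 ≤ p) (b : Fin p) (hb : (b : ℕ) = p - 1) :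
    SS g E (p-1) = c⁻¹ * (∑ σ : Equiv.Perm (Fin p), ((Equiv.Perm.sign σ : ℤ) : ℂ) *
        ((WE E σ (List.finRange p)) * f).trace)
      + c⁻¹ * GG g E y b (p-1) 0 := by
  have hnil : (List.finRange p).drop (p-1+1) = [] := by
    apply List.drop_eq_nil_of_le
    simp only [List.length_finRange]
    omega
  have hdrop : (List.finRange p).drop (p-1) = [b] := by
    rw [drop_finRange_cons (p-1) (by omega), hnil]
    congr 1
    exact Fin.ext hb.symm
  have hfull : (List.finRange p).take (p-1) ++ [b] = List.finRange p := by
    have h := List.take_append_drop (p-1) (List.finRange p)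
    rw [hdrop] at h
    exact h
  unfold SS GG
  have hsplit : ∀ σ : Equiv.Perm (Fin p),
      ((Equiv.Perm.sign σ : ℤ) : ℂ) *
        (WE E σ ((List.finRange p).take (p-1)) * WF g E σ ((List.finRange p).drop (p-1))).trace
      = c⁻¹ * (((Equiv.Perm.sign σ : ℤ) : ℂ) * ((WE E σ (List.finRange p)) * f).trace)
        + c⁻¹ * (((Equiv.Perm.sign σ : ℤ) : ℂ) * (y (σ b) *
            (WE E σ ((List.finRange p).take (p-1) ++
                ((List.finRange p).drop (p-1+1)).take (2*0)) *
              WF g E σ ((List.finRange p).drop (p-1+1+2*0))).trace)) := by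
    intro σ
    have hWEf : WE E σ (List.finRange p) * f
        = WE E σ ((List.finRange p).take (p-1)) * (E (σ b) * f) := by
      conv_lhs => rw [← hfull]
      rw [WE_append]
      simp only [WE, List.map_cons, List.map_nil, List.prod_cons, List.prod_nil, mul_one]
      rw [mul_assoc]
    have hz : (2:ℕ)*0 = 0 := by norm_num
    rw [hz]
    simp only [List.take_zero, List.append_nil, Nat.add_zero]
    rw [hdrop, WF_cons, WF_nil, mul_one, hrel (σ b), hnil, WF_nil, mul_one]
    rw [mul_add, Matrix.trace_add, mul_smul_comm, mul_smul_comm, Matrix.trace_smul,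
      Matrix.trace_smul, smul_eq_mul, smul_eq_mul, mul_one, ← hWEf]
    ring
  rw [Finset.sum_congr rfl (fun σ _ => hsplit σ), Finset.sum_add_distrib,
    ← Finset.mul_sum, ← Finset.mul_sum]

lemma lemD (E : Fin p → Matrix (Fin N) (Fin N) ℂ)
    (hac : ∀ i j, i ≠ j → E i * E j = -(E j * E i))
    (f : Matrix (Fin N) (Fin N) ℂ) :
    ∑ σ : Equiv.Perm (Fin p), ((Equiv.Perm.sign σ : ℤ) : ℂ) *
        ((WE E σ (List.finRange p)) * f).trace
      = ((p.factorial : ℕ) : ℂ) * ((List.ofFn E).prod * f).trace := by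
  have hperm : ∀ σ : Equiv.Perm (Fin p),
      WE E σ (List.finRange p) = ((Equiv.Perm.sign σ : ℤ)) • (List.ofFn E).prod := by
    intro σ
    have h1 : WE E σ (List.finRange p) = (List.ofFn (E ∘ σ)).prod := by
      unfold WE
      rw [← List.ofFn_eq_map]
      rfl
    rw [h1, perm_ofFn σ E hac]
  have hterm : ∀ σ : Equiv.Perm (Fin p),
      ((Equiv.Perm.sign σ : ℤ) : ℂ) * ((WE E σ (List.finRange p)) * f).trace
        = ((List.ofFn E).prod * f).trace := by
    intro σ
    rw [hperm σ, smul_mul_assoc, Matrix.trace_smul, zsmul_eq_mul]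
    push_cast
    rw [← mul_assoc, ← Int.cast_mul, ← Units.val_mul, Int.units_mul_self]
    simp
  rw [Finset.sum_congr rfl (fun σ _ => hterm σ), Finset.sum_const, Finset.card_univ,
    Fintype.card_perm, Fintype.card_fin, nsmul_eq_mul]

end Main

end Stmt12Aux


open Matrix
open Stmt12Aux

/-- let `p = 2k-1` (`k ≥ 2`), `E₁,…,E_p` skew-adjoint Clifford
matrices, `a ≠ 0` real, `x ∈ ℝ^p`, `f = a·I + Σⱼ xⱼ Eⱼ`. Then `f` is
invertible and `Σ_{σ ∈ S_p} sgn σ · tr(f⁻¹E_{σ(1)} ⋯ f⁻¹E_{σ(p)})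
  = p! a (a² + |x|²)^{-(p+1)/2} tr(E₁⋯E_p)`. -/
theorem stmt_12 (k : ℕ) (hk : 2 ≤ k) (p : ℕ) (hp : p = 2 * k - 1)
    (N : ℕ) (hN : 1 ≤ N) (E : Fin p → Matrix (Fin N) (Fin N) ℂ)
    (hskew : ∀ i, (E i)ᴴ = -(E i))
    (hcliff : ∀ i j, E i * E j + E j * E i
      = if i = j then (-2 : ℂ) • (1 : Matrix (Fin N) (Fin N) ℂ) else 0)
    (a : ℝ) (ha : a ≠ 0) (x : Fin p → ℝ)
    (f : Matrix (Fin N) (Fin N) ℂ)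
    (hf : f = (a : ℂ) • (1 : Matrix (Fin N) (Fin N) ℂ)
      + ∑ j, (x j : ℂ) • E j) :
    IsUnit f ∧
    ∑ σ : Equiv.Perm (Fin p), ((Equiv.Perm.sign σ : ℤ) : ℂ) *
        (List.ofFn fun b : Fin p => f⁻¹ * E (σ b)).prod.trace
      = (Nat.factorial p : ℂ) * (a : ℂ)
        * (((a ^ 2 + ∑ j, x j ^ 2 : ℝ) ^ (-((p : ℝ) + 1) / 2) : ℝ) : ℂ)
        * (List.ofFn E).prod.trace := by
  have hp3 : 3 ≤ p := by omega
  have hpodd : Odd p := ⟨k - 1, by omega⟩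
  -- basic Clifford consequences
  have hsq : ∀ i, E i * E i = -1 := by
    intro i
    have h := hcliff i i
    rw [if_pos rfl] at h
    have h2 : (2:ℂ) • (E i * E i) = (2:ℂ) • (-1 : Matrix (Fin N) (Fin N) ℂ) := by
      rw [two_smul, h, smul_neg, ← neg_smul]
    exact smul_right_injective _ (two_ne_zero' ℂ) h2
  have hac : ∀ i j, i ≠ j → E i * E j = -(E j * E i) := by
    intro i j hij
    have h := hcliff i j
    rw [if_neg hij] at h
    exact eq_neg_of_add_eq_zero_left h
  set creal : ℝ := a^2 + ∑ j, x j^2 with hcreal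
  have hcpos : 0 < creal := by
    have h1 : 0 < a^2 := by positivity
    have h2 : 0 ≤ ∑ j, x j^2 := Finset.sum_nonneg (fun j _ => sq_nonneg _)
    rw [hcreal]; linarith
  set c : ℂ := (creal : ℂ) with hc
  have hc0 : c ≠ 0 := by
    rw [hc]
    exact_mod_cast ne_of_gt hcpos
  set u : Matrix (Fin N) (Fin N) ℂ := ∑ j, (x j:ℂ) • E j with hu
  set y : Fin p → ℂ := fun j => 2 * (x j : ℂ) with hy
  have hcs : c = (a:ℂ)^2 + ∑ j, ((x j:ℂ))^2 := by
    rw [hc, hcreal]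
    push_cast
    ring
  -- u * u
  have huu : u * u = (-(∑ j, ((x j:ℂ))^2)) • (1 : Matrix (Fin N) (Fin N) ℂ) := by
    have expand : u * u = ∑ i, ∑ j, (((x i:ℂ) * (x j:ℂ)) • (E i * E j)) := by
      rw [hu, Finset.sum_mul_sum]
      exact Finset.sum_congr rfl fun i _ => Finset.sum_congr rfl fun j _ =>
        smul_mul_smul_comm _ _ _ _
    have expand2 : u * u = ∑ i, ∑ j, (((x i:ℂ) * (x j:ℂ)) • (E j * E i)) := by
      rw [expand, Finset.sum_comm]
      exact Finset.sum_congr rfl fun i _ => Finset.sum_congr rfl fun j _ => by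
        rw [mul_comm ((x j:ℂ))]
    have key : (2:ℂ) • (u * u) = ∑ i, ((-2:ℂ) * ((x i:ℂ))^2) • (1 : Matrix (Fin N) (Fin N) ℂ) := by
      calc (2:ℂ) • (u*u)
          = ∑ i, ∑ j, ((x i:ℂ)*(x j:ℂ)) • (E i * E j + E j * E i) := by
            rw [two_smul]
            nth_rewrite 1 [expand]
            rw [expand2, ← Finset.sum_add_distrib]
            refine Finset.sum_congr rfl fun i _ => ?_
            rw [← Finset.sum_add_distrib]
            exact Finset.sum_congr rfl fun j _ => (smul_add _ _ _).symm
        _ = ∑ i, ((-2:ℂ) * ((x i:ℂ))^2) • (1 : Matrix (Fin N) (Fin N) ℂ) := by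
            refine Finset.sum_congr rfl fun i _ => ?_
            rw [Finset.sum_eq_single i]
            · rw [hcliff i i, if_pos rfl, smul_smul]
              congr 1
              ring
            · intro j _ hji
              rw [hcliff i j, if_neg (fun h => hji h.symm), smul_zero]
            · intro h
              exact absurd (Finset.mem_univ i) h
    have hrhs : (2:ℂ) • ((-(∑ j, ((x j:ℂ))^2)) • (1 : Matrix (Fin N) (Fin N) ℂ))
        = ∑ i, ((-2:ℂ) * ((x i:ℂ))^2) • (1 : Matrix (Fin N) (Fin N) ℂ) := by
      rw [← Finset.sum_smul, smul_smul]
      congr 1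
      rw [mul_neg, Finset.mul_sum, ← Finset.sum_neg_distrib]
      exact Finset.sum_congr rfl fun i _ => by ring
    exact smul_right_injective _ (two_ne_zero' ℂ) (key.trans hrhs.symm)
  set g0 : Matrix (Fin N) (Fin N) ℂ := (a:ℂ) • 1 - u with hg0
  have hfg0 : f * g0 = c • 1 := by
    rw [hf, hg0]
    have expand : ((a:ℂ) • (1 : Matrix (Fin N) (Fin N) ℂ) + u) * ((a:ℂ) • 1 - u)
        = ((a:ℂ)*(a:ℂ)) • 1 - u * u := by
      simp only [mul_sub, add_mul, smul_mul_assoc, mul_smul_comm, one_mul, mul_one, smul_smul,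
        smul_add, smul_sub]
      abel
    rw [expand, huu, neg_smul, sub_neg_eq_add, ← add_smul]
    congr 1
    rw [hcs]
    ring
  have hg0f : g0 * f = c • 1 := by
    rw [hf, hg0]
    have expand : ((a:ℂ) • (1 : Matrix (Fin N) (Fin N) ℂ) - u) * ((a:ℂ) • 1 + u)
        = ((a:ℂ)*(a:ℂ)) • 1 - u * u := by
      simp only [mul_add, sub_mul, smul_mul_assoc, mul_smul_comm, one_mul, mul_one, smul_smul,
        smul_add, smul_sub]
      abel
    rw [expand, huu, neg_smul, sub_neg_eq_add, ← add_smul]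
    congr 1
    rw [hcs]
    ring
  have hfi : f * (c⁻¹ • g0) = 1 := by
    rw [mul_smul_comm, hfg0, smul_smul, inv_mul_cancel₀ hc0, one_smul]
  have hif : (c⁻¹ • g0) * f = 1 := by
    rw [smul_mul_assoc, hg0f, smul_smul, inv_mul_cancel₀ hc0, one_smul]
  have hunit : IsUnit f := ⟨⟨f, c⁻¹ • g0, hfi, hif⟩, rfl⟩
  have hinv : f⁻¹ = c⁻¹ • g0 := Matrix.inv_eq_right_inv hfi
  have hfg1 : f * f⁻¹ = 1 := by rw [hinv]; exact hfi
  -- the key one-step relation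
  have hrel : ∀ j, f⁻¹ * E j = c⁻¹ • (E j * f) + (y j * c⁻¹) • 1 := by
    intro j
    have huEj : u * E j = ((-2)*(x j:ℂ)) • 1 - E j * u := by
      rw [hu, Finset.sum_mul]
      have h1 : ∀ i, ((x i:ℂ) • E i) * E j
          = (x i:ℂ) • (if i = j then (-2:ℂ) • (1 : Matrix (Fin N) (Fin N) ℂ) else 0)
            - (x i:ℂ) • (E j * E i) := by
        intro i
        rw [smul_mul_assoc, eq_sub_of_add_eq (hcliff i j), smul_sub]
      rw [Finset.sum_congr rfl fun i _ => h1 i, Finset.sum_sub_distrib]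
      congr 1
      · rw [Finset.sum_eq_single j]
        · rw [if_pos rfl, smul_smul]
          congr 1
          ring
        · intro i _ hij
          rw [if_neg hij, smul_zero]
        · intro h
          exact absurd (Finset.mem_univ j) h
      · rw [Finset.mul_sum]
        exact Finset.sum_congr rfl fun i _ => (mul_smul_comm _ _ _).symm
    have hg0Ej : g0 * E j = E j * f + (2*(x j:ℂ)) • 1 := by
      rw [hg0, sub_mul, smul_mul_assoc, one_mul, huEj, hf, mul_add, mul_smul_comm, mul_one]
      rw [neg_mul, neg_smul]
      abel
    rw [hinv, smul_mul_assoc, hg0Ej, smul_add, smul_smul]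
    congr 1
    congr 1
    simp only [hy]
    ring
  -- pairwise absorption step
  have hstep : ∀ (j j' : Fin p) (Z : Matrix (Fin N) (Fin N) ℂ),
      (f⁻¹ * E j) * ((f⁻¹ * E j') * Z)
        = c⁻¹ • (E j * (E j' * Z)) + (y j * c⁻¹) • ((f⁻¹ * E j') * Z) := by
    have habs : ∀ W, f * (f⁻¹ * W) = W := fun W => by rw [← mul_assoc, hfg1, one_mul]
    intro j j' Z
    rw [hrel j, add_mul, smul_mul_assoc, smul_mul_assoc, one_mul]
    congr 1
    congr 1
    rw [mul_assoc (E j) f ((f⁻¹ * E j') * Z), mul_assoc f⁻¹ (E j') Z, habs]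
  -- outer recursion
  have houter : ∀ m s : ℕ, 2*s + 2*m = p - 1 →
      SS f⁻¹ E (2*s) = (c⁻¹)^m * SS f⁻¹ E (p-1) := by
    intro m
    induction m with
    | zero =>
      intro s hs
      rw [pow_zero, one_mul, show 2*s = p - 1 by omega]
    | succ m ih =>
      intro s hs
      have hlt : 2*s < p := by omega
      have hA := lemA E f⁻¹ c y hstep (2*s) (by omega) ⟨2*s, hlt⟩ rfl
      have hG := lemB E hsq hac f⁻¹ c y hstep hpodd hp3 (m+1) (2*s) 0 ⟨2*s, hlt⟩ rfl (by omega)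
      rw [hA, hG, show 2*s+2 = 2*(s+1) by ring, ih (s+1) (by omega)]
      ring
  -- vanishing of tr(ω E j)
  have hzEj : ∀ j, ((List.ofFn E).prod * E j).trace = 0 := by
    intro j
    have hωEj : (List.ofFn E).prod * E j = (((List.finRange p) ++ [j]).map E).prod := by
      rw [List.ofFn_eq_map, List.map_append, List.prod_append]
      simp
    obtain ⟨j', hj'⟩ : ∃ j' : Fin p, j' ≠ j := by
      by_cases h0 : j = ⟨0, by omega⟩
      · exact ⟨⟨1, by omega⟩, by rw [h0]; intro hc; exact absurd (Fin.mk.injEq .. ▸ hc) (by simp)⟩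
      · exact ⟨⟨0, by omega⟩, fun hc => h0 hc.symm⟩
    have hcount : ((List.finRange p) ++ [j]).countP (fun i => decide (i ≠ j')) = p := by
      rw [List.countP_append, countP_ne _ (List.nodup_finRange p) j' (List.mem_finRange j')]
      have : ([j].countP (fun i => decide (i ≠ j'))) = 1 := by
        simp [List.countP_cons, Ne.symm hj']
      rw [this, List.length_finRange]
      omega
    have hodd2 : Odd (((List.finRange p) ++ [j]).countP (fun i => decide (i ≠ j'))) := by
      rw [hcount]; exact hpodd
    rw [hωEj]
    exact trace_zero E hsq hac _ j' hodd2
  have htrf : ((List.ofFn E).prod * f).trace = (a:ℂ) * (List.ofFn E).prod.trace := by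
    rw [hf, mul_add, mul_smul_comm, mul_one, hu, Finset.mul_sum]
    rw [Matrix.trace_add, Matrix.trace_smul]
    have : ∀ j ∈ Finset.univ, ((List.ofFn E).prod * ((x j:ℂ) • E j)).trace = 0 := by
      intro j _
      rw [mul_smul_comm, Matrix.trace_smul, hzEj j, smul_zero]
    rw [Matrix.trace_sum, Finset.sum_congr rfl this, Finset.sum_const_zero, add_zero,
      smul_eq_mul]
  -- end game
  have hltp : p - 1 < p := by omega
  have hC := lemC E f⁻¹ f c y hrel (by omega) ⟨p-1, hltp⟩ rfl
  have hGC := lemB E hsq hac f⁻¹ c y hstep hpodd hp3 0 (p-1) 0 ⟨p-1, hltp⟩ rfl (by omega)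
  have hD := lemD E hac f
  have hSfinal : SS f⁻¹ E (p-1)
      = c⁻¹ * (((p.factorial : ℕ):ℂ) * ((a:ℂ) * (List.ofFn E).prod.trace)) := by
    rw [hC, hGC, hD, htrf]
    ring
  have hS0 : SS f⁻¹ E 0
      = (c⁻¹)^k * (((p.factorial : ℕ):ℂ) * ((a:ℂ) * (List.ofFn E).prod.trace)) := by
    have h := houter (k-1) 0 (by omega)
    rw [show 2*0 = 0 by ring] at h
    rw [h, hSfinal, ← mul_assoc, ← pow_succ, show k-1+1 = k by omega]
  have hLHS : (∑ σ : Equiv.Perm (Fin p), ((Equiv.Perm.sign σ : ℤ) : ℂ) *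
      (List.ofFn fun b : Fin p => f⁻¹ * E (σ b)).prod.trace) = SS f⁻¹ E 0 := by
    unfold SS
    refine Finset.sum_congr rfl fun σ _ => ?_
    congr 2
    simp [WE, WF, List.ofFn_eq_map]
  have hpow : ((creal ^ (-((p:ℝ)+1)/2) : ℝ) : ℂ) = (c⁻¹)^k := by
    have hpr : ((p:ℝ)) = 2*(k:ℝ) - 1 := by
      rw [hp, Nat.cast_sub (by omega : 1 ≤ 2*k)]
      push_cast
      ring
    have hexp : (-((p:ℝ)+1)/2) = -(k:ℝ) := by rw [hpr]; ring
    rw [hexp]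
    rw [show (-(k:ℝ)) = -((k:ℕ):ℝ) by norm_num]
    rw [Real.rpow_neg (le_of_lt hcpos), Real.rpow_natCast]
    push_cast
    rw [hc, inv_pow]
  refine ⟨hunit, ?_⟩
  rw [hLHS, hS0, hpow]
  push_cast
  ring
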